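/- Let f, g : ℝⁿ → ℝⁿ be C² vector fields and Φ : ℝⁿ → ℝ a C² function, and let x₀ ≠ 0 satisfy (gΦ)(x₀) = 0, (fΦ)(x₀) = 0 and ([f,g]Φ)(x₀) ≠ 0. Then there exist constants u₁, u₂ ∈ ℝ and t̄ > 0 such that for all t ∈ (0, t̄], Φ((X_t ∘ Y_t)(x₀)) < Φ(x₀), where Y_t(x₀) denotes the value at time t of the solution of ẏ = f(y) + u₁ g(y) starting at x₀ at time 0, and X_t(z) denotes the value at time t of the solution of ẋ = f(x) + u₂ g(x) starting at z at time 0. -/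

import Mathlib

open Filter Set

noncomputable section

open Metric intervalIntegral
open scoped NNReal

/-- Picard-Lindelöf with containment of the solution in the closed ball. -/
theorem pl_exists_mem {E : Type*} [NormedAddCommGroup E] [NormedSpace ℝ E] [CompleteSpace E]
    {v : ℝ → E → E} {tMin tMax : ℝ} {t₀ : Icc tMin tMax} (x₀ : E) {a L K : ℝ≥0}
    (hpl : IsPicardLindelof v t₀ x₀ a 0 L K) :
    ∃ f : ℝ → E, f t₀ = x₀ ∧ (∀ t ∈ Icc tMin tMax, f t ∈ closedBall x₀ a) ∧
      ∀ t ∈ Icc tMin tMax, HasDerivWithinAt f (v t (f t)) (Icc tMin tMax) t := by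
  obtain ⟨α, hα⟩ := ODE.FunSpace.exists_isFixedPt_next hpl (mem_closedBall_self le_rfl)
  refine ⟨α.compProj, by rw [ODE.FunSpace.compProj_val, ← hα, ODE.FunSpace.next_apply₀],
    fun t _ => α.compProj_mem_closedBall hpl.mul_max_le, fun t ht => ?_⟩
  apply ODE.hasDerivWithinAt_picard_Icc t₀.2 hpl.continuousOn_uncurry
    α.continuous_compProj.continuousOn (fun _ _ => α.compProj_mem_closedBall hpl.mul_max_le)
    x₀ ht |>.congr_of_mem _ ht
  intro t' ht'
  nth_rw 1 [← hα]
  rw [ODE.FunSpace.compProj_of_mem ht', ODE.FunSpace.next_apply]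

/-- A locally uniform family of integral curves of a `C¹` vector field. -/
theorem flow_family {E : Type*} [NormedAddCommGroup E] [NormedSpace ℝ E] [CompleteSpace E]
    [ProperSpace E] {V : E → E} (hV : ContDiff ℝ 1 V) (x₀ : E) :
    ∃ R M ε : ℝ, 0 < R ∧ 0 < M ∧ 0 < ε ∧ (∀ x ∈ closedBall x₀ R, ‖V x‖ ≤ M) ∧
      ∃ χ : E → ℝ → E, ∀ y ∈ closedBall x₀ (R/2),
        χ y 0 = y ∧ (∀ t ∈ Icc (-ε) ε, χ y t ∈ closedBall x₀ R) ∧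
        (∀ t ∈ Ioo (-ε) ε, HasDerivAt (χ y) (V (χ y t)) t) := by
  obtain ⟨L, s, hs, hlip⟩ := hV.contDiffAt (x := x₀).exists_lipschitzOnWith
  obtain ⟨r, hr, hball⟩ := Metric.mem_nhds_iff.mp hs
  set R : ℝ := r / 2 with hR
  have hR0 : 0 < R := by positivity
  have hsub : closedBall x₀ R ⊆ s :=
    (closedBall_subset_ball (by linarith)).trans hball
  obtain ⟨C, hC⟩ := (isCompact_closedBall x₀ R).exists_bound_of_continuousOn
    (hV.continuous.continuousOn)
  set M : ℝ := max C 0 + 1 with hM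
  have hM0 : 0 < M := by positivity
  have hMb : ∀ x ∈ closedBall x₀ R, ‖V x‖ ≤ M := fun x hx =>
    (hC x hx).trans (by simp [hM]; nlinarith [le_max_left C (0:ℝ)])
  set ε : ℝ := R / (2 * M) with hε
  have hε0 : 0 < ε := by positivity
  have key : ∀ y : E, ∃ c : ℝ → E, y ∈ closedBall x₀ (R/2) →
      c 0 = y ∧ (∀ t ∈ Icc (-ε) ε, c t ∈ closedBall x₀ R) ∧
      (∀ t ∈ Ioo (-ε) ε, HasDerivAt c (V (c t)) t) := by
    intro y
    by_cases hy : y ∈ closedBall x₀ (R/2)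
    · have hsub2 : closedBall y (R/2) ⊆ closedBall x₀ R := by
        apply closedBall_subset_closedBall'
        have := mem_closedBall.mp hy
        linarith [this]
      have hR2 : (0:ℝ) ≤ R/2 := by positivity
      have hpl : IsPicardLindelof (fun _ : ℝ => V)
          (⟨0, ⟨by linarith, by linarith⟩⟩ : Icc (-ε) ε) y (R/2).toNNReal 0 M.toNNReal L :=
        { lipschitzOnWith := fun t _ => by
            rw [Real.coe_toNNReal _ hR2]; exact (hlip.mono (hsub2.trans hsub))
          continuousOn := fun x _ => continuousOn_const
          norm_le := fun t _ x hx => by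
            rw [Real.coe_toNNReal _ hR2] at hx
            rw [Real.coe_toNNReal _ hM0.le]
            exact hMb x (hsub2 hx)
          mul_max_le := by
            show ((M.toNNReal : ℝ≥0) : ℝ) * max (ε - 0) (0 - -ε) ≤ ((R/2).toNNReal : ℝ) - ((0:ℝ≥0) : ℝ)
            simp only [sub_zero, zero_sub, neg_neg, max_self, NNReal.coe_zero]
            rw [Real.coe_toNNReal _ hR2, Real.coe_toNNReal _ hM0.le, hε]
            rw [mul_div_assoc']
            rw [div_le_iff₀ (by positivity)]
            ring_nf
            nlinarith }
      obtain ⟨c, hc0, hcmem, hcderiv⟩ := pl_exists_mem y hpl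
      refine ⟨c, fun _ => ⟨hc0, fun t ht => hsub2 (by
        have := hcmem t ht; rwa [Real.coe_toNNReal _ hR2] at this), fun t ht => ?_⟩⟩
      exact (hcderiv t (Ioo_subset_Icc_self ht)).hasDerivAt (Icc_mem_nhds ht.1 ht.2)
    · exact ⟨fun _ => y, fun h => absurd h hy⟩
  choose χ hχ using key
  exact ⟨R, M, ε, hR0, hM0, hε0, hMb, χ, fun y hy => hχ y hy⟩


/-- FTC along an integral curve, scalar observable. -/
theorem ftc_curve {E : Type*} [NormedAddCommGroup E] [NormedSpace ℝ E]
    {W : E → ℝ} (hW : ContDiff ℝ 1 W) {V : E → E} (hV : Continuous V) {c : ℝ → E} {s : ℝ}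
    (hs : 0 ≤ s) (hc : ∀ σ ∈ Icc 0 s, HasDerivAt c (V (c σ)) σ) :
    W (c s) - W (c 0) = ∫ σ in (0:ℝ)..s, fderiv ℝ W (c σ) (V (c σ)) := by
  symm
  apply intervalIntegral.integral_eq_sub_of_hasDerivAt
  · intro σ hσ
    rw [uIcc_of_le hs] at hσ
    exact ((hW.differentiable one_ne_zero _).hasFDerivAt.comp_hasDerivAt σ (hc σ hσ))
  · apply ContinuousOn.intervalIntegrable
    rw [uIcc_of_le hs]
    have hcc : ContinuousOn c (Icc 0 s) := fun σ hσ =>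
      (hc σ hσ).continuousAt.continuousWithinAt
    exact (((hW.continuous_fderiv one_ne_zero).clm_apply hV).comp_continuousOn hcc)

/-- FTC along an integral curve, vector version. -/
theorem ftc_vec {E : Type*} [NormedAddCommGroup E] [NormedSpace ℝ E] [CompleteSpace E]
    {V : E → E} (hV : Continuous V) {c : ℝ → E} {s : ℝ}
    (hs : 0 ≤ s) (hc : ∀ σ ∈ Icc 0 s, HasDerivAt c (V (c σ)) σ) :
    c s - c 0 = ∫ σ in (0:ℝ)..s, V (c σ) := by
  symm
  apply intervalIntegral.integral_eq_sub_of_hasDerivAt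
  · intro σ hσ
    rw [uIcc_of_le hs] at hσ
    exact hc σ hσ
  · apply ContinuousOn.intervalIntegrable
    rw [uIcc_of_le hs]
    exact hV.comp_continuousOn fun σ hσ => (hc σ hσ).continuousAt.continuousWithinAt

/-- Integral bound: if the integrand is pointwise `≤ K`, the integral from `0` to `s` is `≤ s*K`. -/
theorem integral_le_const {φ : ℝ → ℝ} {s K : ℝ} (hs : 0 ≤ s)
    (hφ : IntervalIntegrable φ MeasureTheory.volume 0 s)
    (hK : ∀ σ ∈ Icc (0:ℝ) s, φ σ ≤ K) :
    (∫ σ in (0:ℝ)..s, φ σ) ≤ s * K := by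
  have := intervalIntegral.integral_mono_on hs hφ intervalIntegrable_const hK
  simpa [smul_eq_mul] using this

set_option maxHeartbeats 1000000 in
/-- Core second-order decrease along the composition of two flows. -/
theorem case3_core {E : Type*} [NormedAddCommGroup E] [NormedSpace ℝ E] [CompleteSpace E]
    [ProperSpace E] (V₁ V₂ : E → E) (hV₁1 : ContDiff ℝ 1 V₁) (hV₂1 : ContDiff ℝ 1 V₂)
    (Φ : E → ℝ) (hΦ1 : ContDiff ℝ 1 Φ) (hΦ' : ContDiff ℝ 1 (fderiv ℝ Φ)) (x₀ : E)
    (hP0 : fderiv ℝ Φ x₀ (V₁ x₀) = 0) (hQ0 : fderiv ℝ Φ x₀ (V₂ x₀) = 0)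
    (hkey : (fderiv ℝ (fun x => fderiv ℝ Φ x (V₁ x)) x₀) (V₁ x₀)
      + 2 * (fderiv ℝ (fun x => fderiv ℝ Φ x (V₂ x)) x₀) (V₁ x₀)
      + (fderiv ℝ (fun x => fderiv ℝ Φ x (V₂ x)) x₀) (V₂ x₀) = -1) :
    ∃ tb : ℝ, 0 < tb ∧ ∃ γ : ℝ → E, ∃ χ : E → ℝ → E, ∃ Rh : ℝ,
      γ 0 = x₀ ∧ (∀ t ∈ Icc (0:ℝ) tb, HasDerivAt γ (V₁ (γ t)) t) ∧
      (∀ z ∈ closedBall x₀ Rh, χ z 0 = z) ∧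
      (∀ s ∈ Icc (0:ℝ) tb, γ s ∈ closedBall x₀ Rh) ∧
      (∀ s ∈ Icc (0:ℝ) tb, ∀ t ∈ Icc (0:ℝ) tb, HasDerivAt (χ (γ s)) (V₂ (χ (γ s) t)) t) ∧
      (∀ t ∈ Ioc (0:ℝ) tb, Φ (χ (γ t) t) < Φ x₀) := by
  set P : E → ℝ := fun x => fderiv ℝ Φ x (V₁ x) with hPdef
  set Q : E → ℝ := fun x => fderiv ℝ Φ x (V₂ x) with hQdef
  have hP1 : ContDiff ℝ 1 P := hΦ'.clm_apply hV₁1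
  have hQ1 : ContDiff ℝ 1 Q := hΦ'.clm_apply hV₂1
  set Pf : E → ℝ := fun x => fderiv ℝ P x (V₁ x) with hPfdef
  set Qf : E → ℝ := fun x => fderiv ℝ Q x (V₁ x) with hQfdef
  set Qg : E → ℝ := fun x => fderiv ℝ Q x (V₂ x) with hQgdef
  have hPfc : Continuous Pf := (hP1.continuous_fderiv one_ne_zero).clm_apply hV₁1.continuous
  have hQfc : Continuous Qf := (hQ1.continuous_fderiv one_ne_zero).clm_apply hV₁1.continuous
  have hQgc : Continuous Qg := (hQ1.continuous_fderiv one_ne_zero).clm_apply hV₂1.continuous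
  have hP0' : P x₀ = 0 := hP0
  have hQ0' : Q x₀ = 0 := hQ0
  have hkey2 : Pf x₀ + 2 * Qf x₀ + Qg x₀ = -1 := hkey
  obtain ⟨R, M, ε₂, hR0, hM0, hε20, hMb, χ, hχ⟩ := flow_family hV₂1 x₀
  obtain ⟨γ, hγ0, ε₁, hε10, hγd⟩ :=
    (hV₁1.contDiffAt (x := x₀)).exists_forall_mem_closedBall_exists_eq_forall_mem_Ioo_hasDerivAt₀ (0:ℝ)
  rw [zero_sub, zero_add] at hγd
  -- continuity radii
  obtain ⟨δa, hδa0, hδa⟩ := Metric.continuousAt_iff.mp hPfc.continuousAt (1/16) (by norm_num)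
  obtain ⟨δb, hδb0, hδb⟩ := Metric.continuousAt_iff.mp hQfc.continuousAt (1/16) (by norm_num)
  obtain ⟨δc, hδc0, hδc⟩ := Metric.continuousAt_iff.mp hQgc.continuousAt (1/16) (by norm_num)
  set δ : ℝ := (min (min δa δb) (min δc R)) / 2 with hδdef
  have hδ0 : 0 < δ := by
    have := lt_min (lt_min hδa0 hδb0) (lt_min hδc0 hR0)
    positivity
  have hδa' : δ < δa := by
    have h1 : min (min δa δb) (min δc R) ≤ δa := (min_le_left _ _).trans (min_le_left _ _)
    have := lt_min (lt_min hδa0 hδb0) (lt_min hδc0 hR0)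
    rw [hδdef]; linarith
  have hδb' : δ < δb := by
    have h1 : min (min δa δb) (min δc R) ≤ δb := (min_le_left _ _).trans (min_le_right _ _)
    have := lt_min (lt_min hδa0 hδb0) (lt_min hδc0 hR0)
    rw [hδdef]; linarith
  have hδc' : δ < δc := by
    have h1 : min (min δa δb) (min δc R) ≤ δc := (min_le_right _ _).trans (min_le_left _ _)
    have := lt_min (lt_min hδa0 hδb0) (lt_min hδc0 hR0)
    rw [hδdef]; linarith
  have hδR : δ ≤ R / 2 := by
    have h1 : min (min δa δb) (min δc R) ≤ R := (min_le_right _ _).trans (min_le_right _ _)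
    rw [hδdef]; linarith
  -- bounds from continuity, in the closed ball of radius δ
  have hPfb : ∀ x, dist x x₀ ≤ δ → Pf x ≤ Pf x₀ + 1/16 := by
    intro x hx
    have := hδa (lt_of_le_of_lt hx hδa')
    have := abs_lt.mp (by simpa [Real.dist_eq] using this)
    linarith [this.2]
  have hQfb : ∀ x, dist x x₀ ≤ δ → Qf x ≤ Qf x₀ + 1/16 := by
    intro x hx
    have := hδb (lt_of_le_of_lt hx hδb')
    have := abs_lt.mp (by simpa [Real.dist_eq] using this)
    linarith [this.2]
  have hQgb : ∀ x, dist x x₀ ≤ δ → Qg x ≤ Qg x₀ + 1/16 := by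
    intro x hx
    have := hδc (lt_of_le_of_lt hx hδc')
    have := abs_lt.mp (by simpa [Real.dist_eq] using this)
    linarith [this.2]
  -- continuity of γ at 0
  have h0mem : (0:ℝ) ∈ Ioo (-ε₁) ε₁ := ⟨neg_lt_zero.mpr hε10, hε10⟩
  obtain ⟨δ₁, hδ₁0, hδ₁⟩ := Metric.continuousAt_iff.mp
    (hγd 0 h0mem).continuousAt (δ/2) (by positivity)
  -- the time horizon
  set tb : ℝ := min (min (δ₁/2) (ε₁/2)) (min (ε₂/2) (δ/(4*M))) with htbdef
  have htb0 : 0 < tb := by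
    rw [htbdef]
    apply lt_min (lt_min (by positivity) (by positivity)) (lt_min (by positivity) (by positivity))
  have htbδ₁ : tb ≤ δ₁/2 := (min_le_left _ _).trans (min_le_left _ _)
  have htbε₁ : tb ≤ ε₁/2 := (min_le_left _ _).trans (min_le_right _ _)
  have htbε₂ : tb ≤ ε₂/2 := (min_le_right _ _).trans (min_le_left _ _)
  have htbM : tb ≤ δ/(4*M) := (min_le_right _ _).trans (min_le_right _ _)
  -- γ facts on [0, tb]
  have hγd' : ∀ s ∈ Icc (0:ℝ) tb, HasDerivAt γ (V₁ (γ s)) s := fun s hs =>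
    hγd s ⟨by linarith [hs.1], by linarith [hs.2]⟩
  have hγnear : ∀ s ∈ Icc (0:ℝ) tb, dist (γ s) x₀ ≤ δ/2 := by
    intro s hs
    have hd : dist s 0 < δ₁ := by
      rw [Real.dist_eq, sub_zero, abs_of_nonneg hs.1]; linarith [hs.2]
    have := hδ₁ hd
    rw [hγ0] at this
    linarith
  have hγball : ∀ s ∈ Icc (0:ℝ) tb, γ s ∈ closedBall x₀ (R/2) := by
    intro s hs
    rw [mem_closedBall]
    have := hγnear s hs
    linarith
  -- χ facts on [0, tb]
  have hχd : ∀ s ∈ Icc (0:ℝ) tb, ∀ r ∈ Icc (0:ℝ) tb,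
      HasDerivAt (χ (γ s)) (V₂ (χ (γ s) r)) r := by
    intro s hs r hr
    exact (hχ (γ s) (hγball s hs)).2.2 r ⟨by linarith [hr.1], by linarith [hr.2]⟩
  have hχ0 : ∀ s ∈ Icc (0:ℝ) tb, χ (γ s) 0 = γ s := fun s hs => (hχ (γ s) (hγball s hs)).1
  have hχmem : ∀ s ∈ Icc (0:ℝ) tb, ∀ r ∈ Icc (0:ℝ) tb, χ (γ s) r ∈ closedBall x₀ R := by
    intro s hs r hr
    exact (hχ (γ s) (hγball s hs)).2.1 r ⟨by linarith [hr.1], by linarith [hr.2]⟩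
  have hχnear : ∀ s ∈ Icc (0:ℝ) tb, ∀ r ∈ Icc (0:ℝ) tb, dist (χ (γ s) r) x₀ ≤ δ := by
    intro s hs r hr
    have hdiff : χ (γ s) r - χ (γ s) 0 = ∫ σ in (0:ℝ)..r, V₂ (χ (γ s) σ) :=
      ftc_vec hV₂1.continuous hr.1 (fun σ hσ => hχd s hs σ ⟨hσ.1, hσ.2.trans hr.2⟩)
    have hnorm : ‖χ (γ s) r - χ (γ s) 0‖ ≤ M * |r - 0| := by
      rw [hdiff]
      apply intervalIntegral.norm_integral_le_of_norm_le_const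
      intro σ hσ
      rw [uIoc_of_le hr.1] at hσ
      exact hMb _ (hχmem s hs σ ⟨hσ.1.le, hσ.2.trans hr.2⟩)
    rw [hχ0 s hs, sub_zero, abs_of_nonneg hr.1] at hnorm
    have h1 : dist (χ (γ s) r) (γ s) ≤ M * r := by rwa [dist_eq_norm]
    have h2 := hγnear s hs
    have h3 : M * r ≤ δ/4 := by
      have hrM : r ≤ δ/(4*M) := le_trans hr.2 htbM
      calc M * r ≤ M * (δ/(4*M)) := by nlinarith
        _ = δ/4 := by field_simp
    calc dist (χ (γ s) r) x₀ ≤ dist (χ (γ s) r) (γ s) + dist (γ s) x₀ := dist_triangle _ _ _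
      _ ≤ M*r + δ/2 := add_le_add h1 h2
      _ ≤ δ := by linarith
  -- continuity of the curves
  have hγOn : ContinuousOn γ (Icc (0:ℝ) tb) := fun σ hσ =>
    (hγd' σ hσ).continuousAt.continuousWithinAt
  have hχOn : ∀ s ∈ Icc (0:ℝ) tb, ContinuousOn (χ (γ s)) (Icc (0:ℝ) tb) := fun s hs σ hσ =>
    (hχd s hs σ hσ).continuousAt.continuousWithinAt
  -- the decrease
  have hdec : ∀ t ∈ Ioc (0:ℝ) tb, Φ (χ (γ t) t) < Φ x₀ := by
    intro t ht
    have ht0 : (0:ℝ) ≤ t := ht.1.le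
    have htmem : t ∈ Icc (0:ℝ) tb := ⟨ht0, ht.2⟩
    have hsub : Icc (0:ℝ) t ⊆ Icc (0:ℝ) tb := Icc_subset_Icc le_rfl ht.2
    set KP : ℝ := Pf x₀ + 1/16 with hKP
    set KQ : ℝ := Qf x₀ + 1/16 with hKQ
    set KG : ℝ := Qg x₀ + 1/16 with hKG
    have hPγ : ∀ s ∈ Icc (0:ℝ) t, P (γ s) ≤ s * KP := by
      intro s hs
      have heq : P (γ s) - P (γ 0) = ∫ σ in (0:ℝ)..s, fderiv ℝ P (γ σ) (V₁ (γ σ)) :=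
        ftc_curve hP1 hV₁1.continuous hs.1
          (fun σ hσ => hγd' σ (hsub ⟨hσ.1, hσ.2.trans hs.2⟩))
      rw [hγ0, hP0', sub_zero] at heq
      rw [heq]
      apply integral_le_const hs.1
      · apply ContinuousOn.intervalIntegrable
        rw [uIcc_of_le hs.1]
        exact hPfc.comp_continuousOn (hγOn.mono (fun σ hσ => hsub ⟨hσ.1, hσ.2.trans hs.2⟩))
      · intro σ hσ
        exact hPfb _ ((hγnear σ (hsub ⟨hσ.1, hσ.2.trans hs.2⟩)).trans (by linarith))
    have hQγ : Q (γ t) ≤ t * KQ := by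
      have heq : Q (γ t) - Q (γ 0) = ∫ σ in (0:ℝ)..t, fderiv ℝ Q (γ σ) (V₁ (γ σ)) :=
        ftc_curve hQ1 hV₁1.continuous ht0 (fun σ hσ => hγd' σ (hsub hσ))
      rw [hγ0, hQ0', sub_zero] at heq
      rw [heq]
      apply integral_le_const ht0
      · apply ContinuousOn.intervalIntegrable
        rw [uIcc_of_le ht0]
        exact hQfc.comp_continuousOn (hγOn.mono hsub)
      · intro σ hσ
        exact hQfb _ ((hγnear σ (hsub hσ)).trans (by linarith))
    have hQχ : ∀ r ∈ Icc (0:ℝ) t, Q (χ (γ t) r) ≤ Q (γ t) + r * KG := by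
      intro r hr
      have heq : Q (χ (γ t) r) - Q (χ (γ t) 0)
          = ∫ ρ in (0:ℝ)..r, fderiv ℝ Q (χ (γ t) ρ) (V₂ (χ (γ t) ρ)) :=
        ftc_curve hQ1 hV₂1.continuous hr.1
          (fun ρ hρ => hχd t htmem ρ (hsub ⟨hρ.1, hρ.2.trans hr.2⟩))
      rw [hχ0 t htmem] at heq
      have hle : (∫ ρ in (0:ℝ)..r, fderiv ℝ Q (χ (γ t) ρ) (V₂ (χ (γ t) ρ))) ≤ r * KG := by
        apply integral_le_const hr.1
        · apply ContinuousOn.intervalIntegrable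
          rw [uIcc_of_le hr.1]
          exact hQgc.comp_continuousOn
            ((hχOn t htmem).mono (fun ρ hρ => hsub ⟨hρ.1, hρ.2.trans hr.2⟩))
        · intro ρ hρ
          exact hQgb _ (hχnear t htmem ρ (hsub ⟨hρ.1, hρ.2.trans hr.2⟩))
      linarith
    have hI1 : Φ (γ t) - Φ x₀ = ∫ s in (0:ℝ)..t, P (γ s) := by
      have h := ftc_curve hΦ1 hV₁1.continuous ht0 (fun σ hσ => hγd' σ (hsub hσ))
      rw [hγ0] at h
      exact h
    have hI2 : Φ (χ (γ t) t) - Φ (γ t) = ∫ r in (0:ℝ)..t, Q (χ (γ t) r) := by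
      have h := ftc_curve hΦ1 hV₂1.continuous ht0 (fun ρ hρ => hχd t htmem ρ (hsub hρ))
      rw [hχ0 t htmem] at h
      exact h
    have hT1 : (∫ s in (0:ℝ)..t, P (γ s)) ≤ t^2/2 * KP := by
      have hmono := intervalIntegral.integral_mono_on (μ := MeasureTheory.volume) ht0
        (ContinuousOn.intervalIntegrable (by
          rw [uIcc_of_le ht0]
          exact hP1.continuous.comp_continuousOn (hγOn.mono hsub)))
        ((by fun_prop : Continuous fun s : ℝ => s * KP).intervalIntegrable _ _) hPγ
      have hid : (∫ s in (0:ℝ)..t, s * KP) = t^2/2 * KP := by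
        rw [intervalIntegral.integral_mul_const, integral_id]
        ring
      linarith
    have hT3 : (∫ r in (0:ℝ)..t, Q (χ (γ t) r)) ≤ t * Q (γ t) + t^2/2 * KG := by
      have hmono := intervalIntegral.integral_mono_on (μ := MeasureTheory.volume) ht0
        (ContinuousOn.intervalIntegrable (by
          rw [uIcc_of_le ht0]
          exact hQ1.continuous.comp_continuousOn ((hχOn t htmem).mono hsub)))
        ((by fun_prop : Continuous fun r : ℝ => Q (γ t) + r * KG).intervalIntegrable _ _)
        hQχ
      have hid : (∫ r in (0:ℝ)..t, (Q (γ t) + r * KG)) = t * Q (γ t) + t^2/2 * KG := by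
        rw [intervalIntegral.integral_add intervalIntegrable_const
          ((by fun_prop : Continuous fun r : ℝ => r * KG).intervalIntegrable _ _),
          intervalIntegral.integral_const, intervalIntegral.integral_mul_const, integral_id]
        simp [smul_eq_mul]
        try ring
      linarith
    have hQt : t * Q (γ t) ≤ t^2 * KQ := by nlinarith [hQγ, ht0]
    have htpos : 0 < t^2 := pow_pos ht.1 2
    have hfinal : Φ (χ (γ t) t) - Φ x₀ ≤ t^2/2 * KP + t^2 * KQ + t^2/2 * KG := by
      have e : Φ (χ (γ t) t) - Φ x₀ = (Φ (γ t) - Φ x₀) + (Φ (χ (γ t) t) - Φ (γ t)) := by ring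
      rw [e, hI1, hI2]
      have := add_le_add hT1 (hT3.trans (add_le_add_left hQt _))
      linarith [this]
    have hsumK : t^2/2 * KP + t^2 * KQ + t^2/2 * KG = t^2/2 * (Pf x₀ + 2 * Qf x₀ + Qg x₀) + t^2/8 := by
      rw [hKP, hKQ, hKG]; ring
    rw [hkey2] at hsumK
    nlinarith
  exact ⟨tb, htb0, γ, χ, R/2, hγ0, hγd', fun z hz => (hχ z hz).1, hγball, hχd, hdec⟩

set_option maxHeartbeats 4000000 in
/-- Case 3 in the proof of Proposition 2: if `(gΦ)(x₀) = 0`, `(fΦ)(x₀) = 0` and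
`([f,g]Φ)(x₀) ≠ 0` at some `x₀ ≠ 0`, then there are constants `u₁, u₂` and `t̄ > 0` such
that `Φ((X_t ∘ Y_t)(x₀)) < Φ(x₀)` for all `t ∈ (0, t̄]`, where `Y` is the flow of
`f + u₁ g` starting at `x₀` and `X` the flow of `f + u₂ g`. -/
theorem case3_decrease {n : ℕ}
    (f g : EuclideanSpace ℝ (Fin n) → EuclideanSpace ℝ (Fin n))
    (hf : ContDiff ℝ 2 f) (hg : ContDiff ℝ 2 g)
    (Φ : EuclideanSpace ℝ (Fin n) → ℝ) (hΦ : ContDiff ℝ 2 Φ)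
    (x₀ : EuclideanSpace ℝ (Fin n)) (hx₀ : x₀ ≠ 0)
    (hgΦ : fderiv ℝ Φ x₀ (g x₀) = 0)
    (hfΦ : fderiv ℝ Φ x₀ (f x₀) = 0)
    (hLie : fderiv ℝ Φ x₀ (fderiv ℝ g x₀ (f x₀) - fderiv ℝ f x₀ (g x₀)) ≠ 0) :
    ∃ u₁ u₂ tbar : ℝ, 0 < tbar ∧
      ∃ γ : ℝ → EuclideanSpace ℝ (Fin n),
      ∃ α : ℝ → EuclideanSpace ℝ (Fin n) → EuclideanSpace ℝ (Fin n),
        γ 0 = x₀ ∧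
        (∀ t ∈ Set.Icc (0:ℝ) tbar, HasDerivAt γ (f (γ t) + u₁ • g (γ t)) t) ∧
        (∀ z, α 0 z = z) ∧
        (∀ s ∈ Set.Icc (0:ℝ) tbar, ∀ t ∈ Set.Icc (0:ℝ) tbar,
          HasDerivAt (fun r => α r (γ s)) (f (α t (γ s)) + u₂ • g (α t (γ s))) t) ∧
        (∀ t ∈ Set.Ioc (0:ℝ) tbar, Φ (α t (γ t)) < Φ x₀) := by
  have hf1 : ContDiff ℝ 1 f := hf.of_le one_le_two
  have hg1 : ContDiff ℝ 1 g := hg.of_le one_le_two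
  have hΦ' : ContDiff ℝ 1 (fderiv ℝ Φ) := hΦ.fderiv_right (by norm_num)
  set a := f x₀ with ha
  set b := g x₀ with hb
  set DΦ := fderiv ℝ Φ x₀ with hDΦ
  set D2 := fderiv ℝ (fderiv ℝ Φ) x₀ with hD2
  set Df := fderiv ℝ f x₀ with hDf
  set Dg := fderiv ℝ g x₀ with hDg
  set A : ℝ := DΦ (Df a) + D2 a a with hA
  set B : ℝ := DΦ (Dg a) - DΦ (Df b) with hBdef
  have hB : B ≠ 0 := by rw [hBdef, ← map_sub]; exact hLie
  set u : ℝ := -(1 + 4*A) / (2*B) with hu_def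
  have hu : 4*A + 2*u*B = -1 := by rw [hu_def]; field_simp; ring
  -- vector fields
  set V₁ : EuclideanSpace ℝ (Fin n) → EuclideanSpace ℝ (Fin n) :=
    fun x => f x + (-u) • g x with hV₁def
  set V₂ : EuclideanSpace ℝ (Fin n) → EuclideanSpace ℝ (Fin n) :=
    fun x => f x + u • g x with hV₂def
  have hV₁1 : ContDiff ℝ 1 V₁ := hf1.add (hg1.const_smul _)
  have hV₂1 : ContDiff ℝ 1 V₂ := hf1.add (hg1.const_smul _)
  -- observables
  set P : EuclideanSpace ℝ (Fin n) → ℝ := fun x => fderiv ℝ Φ x (V₁ x) with hPdef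
  set Q : EuclideanSpace ℝ (Fin n) → ℝ := fun x => fderiv ℝ Φ x (V₂ x) with hQdef
  have hP1 : ContDiff ℝ 1 P := hΦ'.clm_apply hV₁1
  have hQ1 : ContDiff ℝ 1 Q := hΦ'.clm_apply hV₂1
  have hP0 : P x₀ = 0 := by
    simp only [hPdef, hV₁def, map_add, map_smul, smul_eq_mul, ← hDΦ, ← ha, ← hb, hfΦ, hgΦ]
    ring
  have hQ0 : Q x₀ = 0 := by
    simp only [hQdef, hV₂def, map_add, map_smul, smul_eq_mul, ← hDΦ, ← ha, ← hb, hfΦ, hgΦ]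
    ring
  set Pf : EuclideanSpace ℝ (Fin n) → ℝ := fun x => fderiv ℝ P x (V₁ x) with hPfdef
  set Qf : EuclideanSpace ℝ (Fin n) → ℝ := fun x => fderiv ℝ Q x (V₁ x) with hQfdef
  set Qg : EuclideanSpace ℝ (Fin n) → ℝ := fun x => fderiv ℝ Q x (V₂ x) with hQgdef
  have hPfc : Continuous Pf := (hP1.continuous_fderiv one_ne_zero).clm_apply hV₁1.continuous
  have hQfc : Continuous Qf := (hQ1.continuous_fderiv one_ne_zero).clm_apply hV₁1.continuous
  have hQgc : Continuous Qg := (hQ1.continuous_fderiv one_ne_zero).clm_apply hV₂1.continuous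
  -- derivative computations at x₀
  have hD2at : HasFDerivAt (fderiv ℝ Φ) D2 x₀ := (hΦ'.differentiable one_ne_zero x₀).hasFDerivAt
  have hV₁at : HasFDerivAt V₁ (Df + (-u) • Dg) x₀ :=
    (hf1.differentiable one_ne_zero x₀).hasFDerivAt.add
      (((hg1.differentiable one_ne_zero x₀).hasFDerivAt).const_smul (-u))
  have hV₂at : HasFDerivAt V₂ (Df + u • Dg) x₀ :=
    (hf1.differentiable one_ne_zero x₀).hasFDerivAt.add
      (((hg1.differentiable one_ne_zero x₀).hasFDerivAt).const_smul u)
  have hPat : HasFDerivAt P (DΦ.comp (Df + (-u) • Dg) + D2.flip (V₁ x₀)) x₀ :=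
    hD2at.clm_apply hV₁at
  have hQat : HasFDerivAt Q (DΦ.comp (Df + u • Dg) + D2.flip (V₂ x₀)) x₀ :=
    hD2at.clm_apply hV₂at
  have hV₁x₀ : V₁ x₀ = a + (-u) • b := by rw [hV₁def]
  have hV₂x₀ : V₂ x₀ = a + u • b := by rw [hV₂def]
  have e1 : Pf x₀ = DΦ (Df a) - u * DΦ (Dg a) - u * DΦ (Df b) + u^2 * DΦ (Dg b)
      + (D2 a a - u * D2 a b - u * D2 b a + u^2 * D2 b b) := by
    rw [hPfdef]
    simp only [hPat.fderiv, hV₁x₀, ContinuousLinearMap.add_apply,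
      ContinuousLinearMap.comp_apply, ContinuousLinearMap.flip_apply,
      ContinuousLinearMap.smul_apply, map_add, map_smul, smul_eq_mul]
    ring
  have e2 : Qf x₀ = DΦ (Df a) - u * DΦ (Df b) + u * DΦ (Dg a) - u^2 * DΦ (Dg b)
      + (D2 a a + u * D2 a b - u * D2 b a - u^2 * D2 b b) := by
    rw [hQfdef]
    simp only [hQat.fderiv, hV₁x₀, hV₂x₀, ContinuousLinearMap.add_apply,
      ContinuousLinearMap.comp_apply, ContinuousLinearMap.flip_apply,
      ContinuousLinearMap.smul_apply, map_add, map_smul, smul_eq_mul]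
    ring
  have e3 : Qg x₀ = DΦ (Df a) + u * DΦ (Df b) + u * DΦ (Dg a) + u^2 * DΦ (Dg b)
      + (D2 a a + u * D2 a b + u * D2 b a + u^2 * D2 b b) := by
    rw [hQgdef]
    simp only [hQat.fderiv, hV₂x₀, ContinuousLinearMap.add_apply,
      ContinuousLinearMap.comp_apply, ContinuousLinearMap.flip_apply,
      ContinuousLinearMap.smul_apply, map_add, map_smul, smul_eq_mul]
    ring
  have hsym : D2 a b = D2 b a := by
    exact (hΦ.contDiffAt (x := x₀)).isSymmSndFDerivAt (n := 2) (by simp) a b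
  have hkey : Pf x₀ + 2 * Qf x₀ + Qg x₀ = -1 := by
    rw [e1, e2, e3]
    rw [hA, hBdef] at hu
    linear_combination hu + 2*u*hsym
  have hΦ1 : ContDiff ℝ 1 Φ := hΦ.of_le one_le_two
  have hkey' : (fderiv ℝ (fun x => fderiv ℝ Φ x (V₁ x)) x₀) (V₁ x₀)
      + 2 * (fderiv ℝ (fun x => fderiv ℝ Φ x (V₂ x)) x₀) (V₁ x₀)
      + (fderiv ℝ (fun x => fderiv ℝ Φ x (V₂ x)) x₀) (V₂ x₀) = -1 := by
    exact hkey
  obtain ⟨tb, htb0, γ, χ, Rh, hγ0, hγd', hχ0, hγball, hχd, hdec⟩ :=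
    case3_core V₁ V₂ hV₁1 hV₂1 Φ hΦ1 hΦ' x₀ hP0 hQ0 hkey'
  classical
  refine ⟨-u, u, tb, htb0, γ,
    (fun r z => if z ∈ closedBall x₀ Rh then χ z r else z), hγ0, ?_, ?_, ?_, ?_⟩
  · intro t htm
    exact hγd' t htm
  · intro z
    by_cases hz : z ∈ closedBall x₀ Rh
    · simp only [if_pos hz]
      exact hχ0 z hz
    · simp only [if_neg hz]
  · intro s hs t htm
    simp only [if_pos (hγball s hs)]
    exact hχd s hs t htm
  · intro t ht
    simp only [if_pos (hγball t ⟨ht.1.le, ht.2⟩)]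
    exact hdec t ht
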